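/- Let d ≥ 2 be an integer, μ > 0, and D ∈ ℝ with √(dμ) ≠ -D. Set C = (e^{2√(dμ)} - e^{D+√(dμ)})/(e^{D+√(dμ)} - 1). Then C ∉ [-e^{2√(dμ)}, -1], the function u(r) = √(dμ)·(e^{2√(dμ)r} - C)/(e^{2√(dμ)r} + C) is well-defined and continuously differentiable on [0,1], satisfies u' = -u² + dμ on [0,1], and ∫₀¹ u(r) dr = D. -/

import Mathlib

open Real Set

theorem stmt_0 (d : ℕ) (hd : 2 ≤ d) (μ D : ℝ) (hμ : 0 < μ)
    (hne : Real.sqrt (d * μ) ≠ -D)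
    (s : ℝ) (hs : s = Real.sqrt (d * μ))
    (C : ℝ) (hC : C = (Real.exp (2 * s) - Real.exp (D + s)) / (Real.exp (D + s) - 1))
    (u : ℝ → ℝ)
    (hu : u = fun r => s * (Real.exp (2 * s * r) - C) / (Real.exp (2 * s * r) + C)) :
    C ∉ Set.Icc (-(Real.exp (2 * s))) (-1) ∧
    ContDiffOn ℝ 1 u (Set.Icc 0 1) ∧
    (∀ r ∈ Set.Icc (0:ℝ) 1,
      HasDerivWithinAt u (-(u r) ^ 2 + d * μ) (Set.Icc 0 1) r) ∧
    ∫ r in (0:ℝ)..1, u r = D := by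
  have hdμ : 0 < (d : ℝ) * μ := by
    have hd0 : (0:ℝ) < d := by exact_mod_cast (by omega : 0 < d)
    positivity
  have hs0 : 0 < s := by rw [hs]; exact Real.sqrt_pos.mpr hdμ
  have hs2 : s ^ 2 = (d : ℝ) * μ := by rw [hs, sq]; exact Real.mul_self_sqrt hdμ.le
  have hDs : D + s ≠ 0 := by
    rw [← hs] at hne
    intro h; exact hne (by linarith)
  have hA : Real.exp (D + s) - 1 ≠ 0 := by
    intro h
    have : Real.exp (D + s) = Real.exp 0 := by rw [Real.exp_zero]; linarith
    exact hDs (Real.exp_eq_exp.mp this)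
  have hE1 : (0:ℝ) < Real.exp (2 * s) - 1 := by
    have := Real.exp_lt_exp.mpr (show (0:ℝ) < 2 * s by linarith)
    simp only [Real.exp_zero] at this
    linarith
  have h1C : 1 + C = (Real.exp (2 * s) - 1) / (Real.exp (D + s) - 1) := by
    rw [hC]; field_simp; ring
  have heC : Real.exp (2 * s) + C =
      Real.exp (D + s) * ((Real.exp (2 * s) - 1) / (Real.exp (D + s) - 1)) := by
    rw [hC]; field_simp; ring
  have hsign : (-1 < C) ∨ (C < -Real.exp (2 * s)) := by
    rcases hA.lt_or_gt with hneg | hpos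
    · right
      have : Real.exp (2 * s) + C < 0 := by
        rw [heC]
        have : (Real.exp (2 * s) - 1) / (Real.exp (D + s) - 1) < 0 :=
          div_neg_of_pos_of_neg hE1 hneg
        nlinarith [Real.exp_pos (D + s)]
      linarith
    · left
      have : 0 < 1 + C := by
        rw [h1C]; exact div_pos hE1 hpos
      linarith
  have hden : ∀ r ∈ Set.Icc (0:ℝ) 1, Real.exp (2 * s * r) + C ≠ 0 := by
    intro r hr
    have h1 : (1:ℝ) ≤ Real.exp (2 * s * r) := Real.one_le_exp (by nlinarith [hr.1])
    have h2 : Real.exp (2 * s * r) ≤ Real.exp (2 * s) :=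
      Real.exp_le_exp.mpr (by nlinarith [hr.2])
    rcases hsign with h | h
    · exact ne_of_gt (by linarith)
    · exact ne_of_lt (by linarith)
  have h1C0 : (1:ℝ) + C ≠ 0 := by
    rw [h1C]; exact div_ne_zero (ne_of_gt hE1) hA
  -- auxiliary derivative facts
  have hlin : ∀ r : ℝ, HasDerivAt (fun x : ℝ => 2 * s * x) (2 * s) r := by
    intro r
    simpa using (hasDerivAt_id r).const_mul (2 * s)
  have hEder : ∀ r : ℝ, HasDerivAt (fun x : ℝ => Real.exp (2 * s * x))
      (Real.exp (2 * s * r) * (2 * s)) r := fun r => (hlin r).exp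
  refine ⟨?_, ?_, ?_, ?_⟩
  · -- C not in the interval
    intro hmem
    rcases hsign with h | h
    · exact absurd hmem.2 (by linarith)
    · exact absurd hmem.1 (by linarith)
  · -- ContDiffOn
    rw [hu]
    apply ContDiffOn.div
    · exact (contDiff_const.mul
        (((Real.contDiff_exp).comp (contDiff_const.mul contDiff_id)).sub
          contDiff_const)).contDiffOn
    · exact (((Real.contDiff_exp).comp (contDiff_const.mul contDiff_id)).add
        contDiff_const).contDiffOn
    · exact hden
  · -- derivative
    intro r hr
    have hd0 := hden r hr
    have hnum : HasDerivAt (fun x : ℝ => s * (Real.exp (2 * s * x) - C))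
        (s * (Real.exp (2 * s * r) * (2 * s))) r := ((hEder r).sub_const C).const_mul s
    have hdenom : HasDerivAt (fun x : ℝ => Real.exp (2 * s * x) + C)
        (Real.exp (2 * s * r) * (2 * s)) r := (hEder r).add_const C
    have hquot := hnum.div hdenom hd0
    have heq : -(u r) ^ 2 + (d : ℝ) * μ =
        (s * (Real.exp (2 * s * r) * (2 * s)) * (Real.exp (2 * s * r) + C) -
          s * (Real.exp (2 * s * r) - C) * (Real.exp (2 * s * r) * (2 * s))) /
          (Real.exp (2 * s * r) + C) ^ 2 := by
      rw [hu, ← hs2]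
      beta_reduce
      rw [eq_div_iff (pow_ne_zero 2 hd0), div_pow, add_mul, neg_mul, div_mul_cancel₀ _ (pow_ne_zero 2 hd0)]
      ring
    rw [hu] at heq ⊢
    rw [heq]
    exact (hquot.congr_deriv rfl).hasDerivWithinAt
  · -- integral
    have hcont : ContinuousOn u (Set.Icc 0 1) := by
      rw [hu]
      apply ContinuousOn.div
      · fun_prop
      · fun_prop
      · exact hden
    have hint : IntervalIntegrable u MeasureTheory.volume 0 1 := by
      apply ContinuousOn.intervalIntegrable
      rwa [Set.uIcc_of_le zero_le_one]
    have hF : ∀ r ∈ Set.uIcc (0:ℝ) 1,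
        HasDerivAt (fun x : ℝ => -s * x + Real.log (Real.exp (2 * s * x) + C)) (u r) r := by
      intro r hr
      rw [Set.uIcc_of_le zero_le_one] at hr
      have hd0 := hden r hr
      have hlog : HasDerivAt (fun x : ℝ => Real.log (Real.exp (2 * s * x) + C))
          ((Real.exp (2 * s * r) * (2 * s)) / (Real.exp (2 * s * r) + C)) r :=
        ((hEder r).add_const C).log hd0
      have hfull := (((hasDerivAt_id r).const_mul (-s)).add hlog)
      have : u r = -s * 1 + Real.exp (2 * s * r) * (2 * s) / (Real.exp (2 * s * r) + C) := by
        rw [hu]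
        beta_reduce
        rw [add_div' _ _ _ hd0, div_left_inj' hd0]
        ring
      rw [this]
      exact hfull
    have hval := intervalIntegral.integral_eq_sub_of_hasDerivAt hF hint
    rw [hval]
    have hprod : Real.exp (2 * s * 1) + C = Real.exp (D + s) * (1 + C) := by
      rw [mul_one, heC, h1C]
    have h0 : Real.exp (2 * s * 0) + C = 1 + C := by
      rw [mul_zero, Real.exp_zero]
    rw [hprod, h0, Real.log_mul (Real.exp_ne_zero _) h1C0, Real.log_exp]
    ring
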